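/- Every finite supersolvable group G has a normal 2-complement; that is, there is a normal subgroup N of G of odd order such that G/N is a 2-group. -/

import Mathlib

universe u

section Aux

private lemma ssAux_chain {G Q : Type*} [Group G] [Group Q] (f : G →* Q)
    (hf : Function.Surjective f)
    (hss : ∃ (k : ℕ) (H : ℕ → Subgroup G),
      H 0 = ⊥ ∧ H k = ⊤ ∧ (∀ i < k, H i ≤ H (i + 1)) ∧ (∀ i, (H i).Normal) ∧
      ∀ i < k, ∃ g : G, H (i + 1) = H i ⊔ Subgroup.zpowers g) :
    ∃ (k : ℕ) (H : ℕ → Subgroup Q),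
      H 0 = ⊥ ∧ H k = ⊤ ∧ (∀ i < k, H i ≤ H (i + 1)) ∧ (∀ i, (H i).Normal) ∧
      ∀ i < k, ∃ g : Q, H (i + 1) = H i ⊔ Subgroup.zpowers g := by
  obtain ⟨k, H, h0, hk, hmono, hnorm, hgen⟩ := hss
  refine ⟨k, fun i => (H i).map f, by simp only [h0, Subgroup.map_bot],
    by simp only [hk, Subgroup.map_top_of_surjective f hf],
    fun i hi => Subgroup.map_mono (hmono i hi),
    fun i => (hnorm i).map f hf, fun i hi => ?_⟩
  obtain ⟨g, hg⟩ := hgen i hi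
  exact ⟨f g, by simp only [hg, Subgroup.map_sup, MonoidHom.map_zpowers]⟩

private lemma exists_zpowers_normal {G : Type*} [Group G] [Nontrivial G]
    (hss : ∃ (k : ℕ) (H : ℕ → Subgroup G),
      H 0 = ⊥ ∧ H k = ⊤ ∧ (∀ i < k, H i ≤ H (i + 1)) ∧ (∀ i, (H i).Normal) ∧
      ∀ i < k, ∃ g : G, H (i + 1) = H i ⊔ Subgroup.zpowers g) :
    ∃ g : G, g ≠ 1 ∧ (Subgroup.zpowers g).Normal := by
  classical
  obtain ⟨k, H, h0, hk, hmono, hnorm, hgen⟩ := hss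
  have htb : (⊤ : Subgroup G) ≠ ⊥ := by
    intro h
    obtain ⟨x, hx⟩ := exists_ne (1 : G)
    exact hx (Subgroup.mem_bot.mp (h ▸ Subgroup.mem_top x))
  have hex : ∃ i, H i ≠ ⊥ := ⟨k, by rw [hk]; exact htb⟩
  set i := Nat.find hex with hidef
  have hi : H i ≠ ⊥ := Nat.find_spec hex
  have hipos : 0 < i := Nat.pos_of_ne_zero fun h => hi (by rw [h, h0])
  have hik : i ≤ k := Nat.find_le (by rw [hk]; exact htb)
  have hj : i - 1 < k := lt_of_lt_of_le (Nat.sub_lt hipos one_pos) hik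
  have hjbot : H (i - 1) = ⊥ := by
    have := Nat.find_min hex (Nat.sub_lt hipos one_pos)
    simpa using this
  obtain ⟨g, hg⟩ := hgen (i - 1) hj
  rw [Nat.sub_add_cancel hipos, hjbot, bot_sup_eq] at hg
  refine ⟨g, ?_, hg ▸ hnorm i⟩
  intro h
  rw [h, Subgroup.zpowers_one_eq_bot] at hg
  exact hi hg

private lemma exists_exponent_subgroup {G : Type*} [Group G] (g : G)
    (hn : (Subgroup.zpowers g).Normal) (m : ℕ) :
    ∃ W : Subgroup G, W.Normal ∧ ∀ x : G, x ∈ W ↔ x ∈ Subgroup.zpowers g ∧ x ^ m = 1 := by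
  refine ⟨{ carrier := {x | x ∈ Subgroup.zpowers g ∧ x ^ m = 1}
            one_mem' := ⟨one_mem _, one_pow m⟩
            mul_mem' := ?_
            inv_mem' := ?_ }, ⟨?_⟩, fun x => Iff.rfl⟩
  · rintro a b ⟨ha, ha1⟩ ⟨hb, hb1⟩
    obtain ⟨i, hi⟩ := Subgroup.mem_zpowers_iff.mp ha
    obtain ⟨j, hjj⟩ := Subgroup.mem_zpowers_iff.mp hb
    subst hi; subst hjj
    exact ⟨mul_mem ha hb,
      by rw [(Commute.zpow_zpow_self g i j).mul_pow, ha1, hb1, one_mul]⟩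
  · rintro a ⟨ha, ha1⟩
    exact ⟨inv_mem ha, by rw [inv_pow, ha1, inv_one]⟩
  · rintro x ⟨hx, hx1⟩ c
    exact ⟨hn.conj_mem x hx c, by rw [conj_pow, hx1, mul_one, mul_inv_cancel]⟩

private lemma comap_card_quotient {G : Type*} [Group G] (W : Subgroup G) [W.Normal]
    (Nb : Subgroup (G ⧸ W)) [Nb.Normal] :
    Nat.card (G ⧸ Nb.comap (QuotientGroup.mk' W)) = Nat.card ((G ⧸ W) ⧸ Nb) := by
  haveI : (Nb.comap (QuotientGroup.mk' W)).Normal := Nb.normal_comap _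
  have hWN : W ≤ Nb.comap (QuotientGroup.mk' W) := by
    intro x hx
    have hx1 : (QuotientGroup.mk' W) x = 1 := (QuotientGroup.eq_one_iff x).mpr hx
    show (QuotientGroup.mk' W) x ∈ Nb
    rw [hx1]; exact Nb.one_mem
  have hmap : (Nb.comap (QuotientGroup.mk' W)).map (QuotientGroup.mk' W) = Nb :=
    Subgroup.map_comap_eq_self_of_surjective (QuotientGroup.mk'_surjective W) Nb
  have e := QuotientGroup.quotientQuotientEquivQuotient W (Nb.comap (QuotientGroup.mk' W)) hWN
  have := Nat.card_congr e.toEquiv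
  rw [hmap] at this
  exact this.symm

end Aux

private theorem stmt11_aux (n : ℕ) : ∀ (G : Type u) [Group G] [Finite G], Nat.card G = n →
    (∃ (k : ℕ) (H : ℕ → Subgroup G),
      H 0 = ⊥ ∧ H k = ⊤ ∧ (∀ i < k, H i ≤ H (i + 1)) ∧ (∀ i, (H i).Normal) ∧
      ∀ i < k, ∃ g : G, H (i + 1) = H i ⊔ Subgroup.zpowers g) →
    ∃ N : Subgroup G, N.Normal ∧ Odd (Nat.card N) ∧ ∃ j : ℕ, Nat.card (G ⧸ N) = 2 ^ j := by
  induction n using Nat.strong_induction_on with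
  | _ n ih =>
  intro G _ _ hn hss
  haveI : Fact (Nat.Prime 2) := ⟨Nat.prime_two⟩
  rcases subsingleton_or_nontrivial G with hG | hG
  · refine ⟨⊥, inferInstance, by rw [Subgroup.card_bot]; exact odd_one, 0, ?_⟩
    rw [pow_zero, Nat.card_congr (QuotientGroup.quotientBot (G := G)).toEquiv]
    exact Nat.card_eq_one_iff_unique.mpr ⟨hG, inferInstance⟩
  obtain ⟨g, hg1, hgn⟩ := exists_zpowers_normal hss
  have hm0 : orderOf g ≠ 0 := (orderOf_pos g).ne'
  have hm1 : orderOf g ≠ 1 := by simpa [orderOf_eq_one_iff] using hg1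
  set m := orderOf g with hmdef
  set a := m.factorization 2 with hadef
  set b := m / 2 ^ a with hbdef
  have hb_dvd : b ∣ m := Nat.ordCompl_dvd m 2
  have hb_odd : ¬ 2 ∣ b := Nat.not_dvd_ordCompl Nat.prime_two hm0
  have hb_pos : 0 < b := Nat.ordCompl_pos 2 hm0
  by_cases hb1 : b = 1
  · -- m is a power of 2 : use Burnside's transfer theorem for the central order-2 element
    have hm2 : m = 2 ^ a := by
      have h := Nat.ordProj_mul_ordCompl_eq_self m 2
      rw [← hadef, ← hbdef, hb1, mul_one] at h
      exact h.symm
    have ha1 : 1 ≤ a := by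
      by_contra h
      push_neg at h
      have h0 : a = 0 := by omega
      rw [h0, pow_zero] at hm2
      exact hm1 hm2
    set t := g ^ (2 ^ (a - 1)) with htdef
    have ht2 : t ^ 2 = 1 := by
      rw [htdef, ← pow_mul, ← pow_succ, Nat.sub_add_cancel ha1, ← hm2, pow_orderOf_eq_one]
    have htne : t ≠ 1 := by
      intro h
      have hdvd : m ∣ 2 ^ (a - 1) := orderOf_dvd_of_pow_eq_one h
      rw [hm2] at hdvd
      have hle := Nat.le_of_dvd (pow_pos (by norm_num : (0:ℕ) < 2) _) hdvd
      have hlt : (2:ℕ) ^ (a - 1) < 2 ^ a :=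
        Nat.pow_lt_pow_right one_lt_two (Nat.sub_lt ha1 one_pos)
      omega
    obtain ⟨W, hWnorm, hWmem⟩ := exists_exponent_subgroup g hgn 2
    haveI := hWnorm
    have htW : t ∈ W := (hWmem t).mpr
      ⟨(Subgroup.zpowers g).pow_mem (Subgroup.mem_zpowers g) _, ht2⟩
    have ht2' : t ^ (2:ℤ) = 1 := by exact_mod_cast ht2
    have hWeq : ∀ x ∈ W, x = 1 ∨ x = t := by
      intro x hx
      obtain ⟨hxA, hx2⟩ := (hWmem x).mp hx
      obtain ⟨i, hi⟩ := Subgroup.mem_zpowers_iff.mp hxA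
      subst hi
      have h2i : g ^ (2 * i) = 1 := by
        rw [mul_comm, zpow_mul]
        exact_mod_cast hx2
      have hdvd : ((m : ℤ)) ∣ 2 * i := orderOf_dvd_iff_zpow_eq_one.mpr h2i
      rw [hm2] at hdvd
      push_cast at hdvd
      obtain ⟨c, hc⟩ := hdvd
      have h2a : ((2:ℤ) ^ a) = 2 * 2 ^ (a - 1) := by
        rw [← pow_succ', Nat.sub_add_cancel ha1]
      have hi2 : i = 2 ^ (a - 1) * c := by
        have h3 : 2 * i = 2 * (2 ^ (a - 1) * c) := by rw [hc, h2a, mul_assoc]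
        exact mul_left_cancel₀ two_ne_zero h3
      have hx_t : g ^ i = t ^ c := by
        rw [hi2, zpow_mul, htdef]
        norm_cast
      rcases Int.even_or_odd c with ⟨d, hd⟩ | ⟨d, hd⟩
      · left
        rw [hx_t, hd, ← two_mul, zpow_mul, ht2', one_zpow]
      · right
        rw [hx_t, hd, zpow_add, zpow_mul, zpow_one, ht2', one_zpow, one_mul]
    have htcentral : ∀ c : G, c * t * c⁻¹ = t := by
      intro c
      rcases hWeq _ (hWnorm.conj_mem t htW c) with h | h
      · exact absurd (conj_eq_one_iff.mp h) htne
      · exact h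
    have hWne : W ≠ ⊥ := fun h => htne (by rwa [h, Subgroup.mem_bot] at htW)
    have hcards0 : Nat.card G = Nat.card (G ⧸ W) * Nat.card W :=
      Subgroup.card_eq_card_quotient_mul_card_subgroup W
    have hQpos : 0 < Nat.card (G ⧸ W) := Nat.card_pos
    have hQlt : Nat.card (G ⧸ W) < n := by
      rw [← hn, hcards0]
      exact (Nat.lt_mul_iff_one_lt_right hQpos).mpr
        ((Subgroup.one_lt_card_iff_ne_bot W).mpr hWne)
    obtain ⟨Nb, hNbnorm, hNbodd, j, hNbj⟩ := ih (Nat.card (G ⧸ W)) hQlt (G ⧸ W) rfl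
      (ssAux_chain (QuotientGroup.mk' W) (QuotientGroup.mk'_surjective W) hss)
    haveI := hNbnorm
    set N : Subgroup G := Nb.comap (QuotientGroup.mk' W) with hNdef
    haveI hNnormal : N.Normal := Nb.normal_comap _
    have hNq : Nat.card (G ⧸ N) = 2 ^ j := by
      rw [hNdef, comap_card_quotient W Nb]
      exact hNbj
    set φ : ↥N →* G ⧸ W := (QuotientGroup.mk' W).comp N.subtype with hφ
    have hker : φ.ker = W.subgroupOf N := by
      ext x
      simp only [hφ, MonoidHom.mem_ker, MonoidHom.comp_apply, Subgroup.mem_subgroupOf,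
        QuotientGroup.mk'_apply, QuotientGroup.eq_one_iff]
      rfl
    have hrange : φ.range = Nb := by
      rw [hφ, MonoidHom.range_comp, Subgroup.range_subtype]
      exact Subgroup.map_comap_eq_self_of_surjective (QuotientGroup.mk'_surjective W) Nb
    have hWN_card : (W.subgroupOf N).index = Nat.card Nb := by
      have e1 : Nat.card (↥N ⧸ φ.ker) = Nat.card φ.range :=
        Nat.card_congr (QuotientGroup.quotientKerEquivRange φ).toEquiv
      rw [hker, hrange] at e1
      exact e1
    have hP1 : IsPGroup 2 (W.subgroupOf N) := by
      intro x
      refine ⟨1, ?_⟩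
      have hx : ((x : ↥N) : G) ∈ W := Subgroup.mem_subgroupOf.mp x.2
      obtain ⟨-, hx2⟩ := (hWmem _).mp hx
      rw [pow_one]
      apply Subtype.ext
      apply Subtype.ext
      push_cast
      exact hx2
    have hP2 : ¬ (2:ℕ) ∣ (W.subgroupOf N).index := by
      rw [hWN_card]
      intro hdvd
      exact (Nat.not_even_iff_odd.mpr hNbodd) (even_iff_two_dvd.mpr hdvd)
    set P : Sylow 2 ↥N := hP1.toSylow hP2 with hPdef
    have hPcoe : (P : Subgroup ↥N) = W.subgroupOf N := rfl
    have hP : Subgroup.normalizer ((P : Subgroup ↥N) : Set ↥N) ≤ Subgroup.centralizer ((P : Subgroup ↥N) : Set ↥N) := by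
      refine le_trans le_top ?_
      intro x _
      rw [Subgroup.mem_centralizer_iff]
      intro y hy
      have hyW : ((y : ↥N) : G) ∈ W := Subgroup.mem_subgroupOf.mp (by rwa [← hPcoe])
      rcases hWeq _ hyW with h | h
      · have h1 : y = 1 := Subtype.ext h
        rw [h1, one_mul, mul_one]
      · apply Subtype.ext
        push_cast
        rw [h]
        have hc : (x : G) * t = t * (x : G) := by
          have h0 := htcentral (x : G)
          calc (x:G) * t = ((x:G) * t * (x:G)⁻¹) * (x:G) := by group
          _ = t * (x:G) := by rw [h0]
        exact hc.symm
    haveI : Finite (Sylow 2 ↥N) :=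
      Finite.of_injective (fun Q : Sylow 2 ↥N => (Q : Subgroup ↥N))
        fun _ _ h => Sylow.ext h
    set K0 := (MonoidHom.transferSylow P hP).ker with hK0def
    have hcomp : Subgroup.IsComplement' K0 (P : Subgroup ↥N) :=
      MonoidHom.ker_transferSylow_isComplement' P hP
    have hK0odd : ¬ (2:ℕ) ∣ Nat.card K0 := MonoidHom.not_dvd_card_ker_transferSylow P hP
    obtain ⟨s, hs⟩ := IsPGroup.iff_card.mp hP1
    have hcardN : Nat.card ↥N = Nat.card K0 * 2 ^ s := by
      rw [← hcomp.card_mul, hPcoe, hs]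
    haveI : K0.Normal := MonoidHom.normal_ker _
    have hK0index : K0.index = 2 ^ s := by
      have h4 := Subgroup.card_mul_index K0
      have hpos : 0 < Nat.card K0 := Nat.card_pos
      have := h4.trans hcardN
      exact Nat.eq_of_mul_eq_mul_left hpos this
    set K : Subgroup G := K0.map N.subtype with hKdef
    have hKcard : Nat.card K = Nat.card K0 :=
      (Nat.card_congr (Subgroup.equivMapOfInjective K0 N.subtype
        (Subgroup.subtype_injective N)).toEquiv).symm
    have hmemK : ∀ x : G, x ∈ K ↔ x ∈ N ∧ ¬ (2:ℕ) ∣ orderOf x := by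
      intro x
      constructor
      · rintro ⟨y, hyK0, rfl⟩
        refine ⟨y.2, fun h2 => hK0odd ?_⟩
        have h3 : orderOf (N.subtype y) = orderOf y :=
          orderOf_injective N.subtype (Subgroup.subtype_injective N) y
        rw [h3] at h2
        exact h2.trans (K0.orderOf_dvd_natCard hyK0)
      · rintro ⟨hxN, hxodd⟩
        set y : ↥N := (⟨x, hxN⟩ : ↥N) with hydef
        have h3 : orderOf x = orderOf y := by
          rw [← orderOf_injective N.subtype (Subgroup.subtype_injective N) y,
            Subgroup.coe_subtype]
        rw [h3] at hxodd
        have h1 : orderOf ((QuotientGroup.mk' K0) y) ∣ orderOf y :=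
          orderOf_map_dvd (QuotientGroup.mk' K0) y
        have h2 : orderOf ((QuotientGroup.mk' K0) y) ∣ 2 ^ s := by
          rw [← hK0index]
          exact orderOf_dvd_natCard _
        obtain ⟨mexp, hmle, hmeq⟩ := (Nat.dvd_prime_pow Nat.prime_two).mp h2
        rcases Nat.eq_zero_or_pos mexp with h0 | h0
        · rw [h0, pow_zero, orderOf_eq_one_iff] at hmeq
          have hyK0 : y ∈ K0 := by
            rwa [QuotientGroup.mk'_apply, QuotientGroup.eq_one_iff] at hmeq
          exact ⟨y, hyK0, rfl⟩
        · exfalso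
          apply hxodd
          have h5 : (2:ℕ) ∣ orderOf ((QuotientGroup.mk' K0) y) := by
            rw [hmeq]
            exact dvd_pow_self 2 h0.ne'
          exact h5.trans h1
    have hKnormal : K.Normal := by
      constructor
      intro x hx c
      obtain ⟨hxN, hxodd⟩ := (hmemK x).mp hx
      refine (hmemK _).mpr ⟨hNnormal.conj_mem x hxN c, ?_⟩
      have horder : orderOf (c * x * c⁻¹) = orderOf x := by
        have h6 := orderOf_injective (MulAut.conj c).toMonoidHom (MulEquiv.injective _) x
        simpa [MulAut.conj_apply] using h6
      rw [horder]
      exact hxodd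
    have hKodd : Odd (Nat.card K) := by
      rw [← Nat.not_even_iff_odd, even_iff_two_dvd, hKcard]
      exact hK0odd
    refine ⟨K, hKnormal, hKodd, j + s, ?_⟩
    have h1 : Nat.card G = Nat.card (G ⧸ K) * Nat.card K :=
      Subgroup.card_eq_card_quotient_mul_card_subgroup K
    have h2 : Nat.card G = Nat.card (G ⧸ N) * Nat.card N :=
      Subgroup.card_eq_card_quotient_mul_card_subgroup N
    have hx : Nat.card (G ⧸ K) * Nat.card K = 2 ^ (j + s) * Nat.card K := by
      rw [← h1, h2, hNq, hcardN, hKcard, pow_add]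
      ring
    have hKpos : 0 < Nat.card K := Nat.card_pos
    exact Nat.eq_of_mul_eq_mul_right hKpos hx
  · -- there is an odd prime dividing m
    set p := b.minFac with hpdef
    have pp : p.Prime := Nat.minFac_prime hb1
    have hp_odd : p ≠ 2 := by
      intro h
      exact hb_odd (h ▸ Nat.minFac_dvd b)
    have hp_dvd_m : p ∣ m := (Nat.minFac_dvd b).trans hb_dvd
    obtain ⟨W, hWnorm, hWmem⟩ := exists_exponent_subgroup g hgn p
    haveI := hWnorm
    have hWne : W ≠ ⊥ := by
      intro h
      have hgp : g ^ (m / p) ∈ W := (hWmem _).mpr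
        ⟨(Subgroup.zpowers g).pow_mem (Subgroup.mem_zpowers g) _,
         by rw [← pow_mul, Nat.div_mul_cancel hp_dvd_m, pow_orderOf_eq_one]⟩
      rw [h, Subgroup.mem_bot] at hgp
      have hdvd := orderOf_dvd_of_pow_eq_one hgp
      have hlt : m / p < m := Nat.div_lt_self (Nat.pos_of_ne_zero hm0) pp.one_lt
      have hpos : 0 < m / p := Nat.div_pos (Nat.le_of_dvd (Nat.pos_of_ne_zero hm0) hp_dvd_m)
        pp.pos
      exact absurd (Nat.le_of_dvd hpos hdvd) (not_le.mpr hlt)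
    have hcards : Nat.card G = Nat.card (G ⧸ W) * Nat.card W :=
      Subgroup.card_eq_card_quotient_mul_card_subgroup W
    have hQpos : 0 < Nat.card (G ⧸ W) := Nat.card_pos
    have hQlt : Nat.card (G ⧸ W) < n := by
      rw [← hn, hcards]
      exact (Nat.lt_mul_iff_one_lt_right hQpos).mpr ((Subgroup.one_lt_card_iff_ne_bot W).mpr hWne)
    obtain ⟨Nb, hNbnorm, hNbodd, j, hNbj⟩ := ih (Nat.card (G ⧸ W)) hQlt (G ⧸ W) rfl
      (ssAux_chain (QuotientGroup.mk' W) (QuotientGroup.mk'_surjective W) hss)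
    haveI := hNbnorm
    refine ⟨Nb.comap (QuotientGroup.mk' W), Nb.normal_comap _, ?_, j, ?_⟩
    · rw [← Nat.not_even_iff_odd, even_iff_two_dvd]
      intro h2
      obtain ⟨y, hy⟩ := exists_prime_orderOf_dvd_card' (G := ↥(Nb.comap (QuotientGroup.mk' W)))
        2 h2
      have hxord : orderOf (y : G) = 2 := by
        rw [← hy]
        exact orderOf_injective _ (Subgroup.subtype_injective _) y
      have h1 : (QuotientGroup.mk' W) (y : G) ∈ Nb := y.2
      set z : ↥Nb := ⟨(QuotientGroup.mk' W) (y : G), h1⟩ with hzdef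
      have hzcard : orderOf z ∣ Nat.card Nb := orderOf_dvd_natCard z
      have hzcoe : orderOf ((QuotientGroup.mk' W) (y : G)) = orderOf z :=
        orderOf_injective _ (Subgroup.subtype_injective _) z
      have hz2 : orderOf z ∣ 2 := by
        rw [← hzcoe, ← hxord]
        exact orderOf_map_dvd _ _
      have hzodd : ¬ 2 ∣ orderOf z := by
        intro hdvd
        exact (Nat.not_even_iff_odd.mpr hNbodd) (even_iff_two_dvd.mpr (hdvd.trans hzcard))
      have hz1 : orderOf z = 1 := by
        rcases (Nat.dvd_prime Nat.prime_two).mp hz2 with h | h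
        · exact h
        · exact absurd (by omega : (2:ℕ) ∣ orderOf z) hzodd
      have hyW : (y : G) ∈ W := by
        rw [orderOf_eq_one_iff] at hz1
        have : (QuotientGroup.mk' W) (y : G) = 1 := Subtype.ext_iff.mp hz1
        exact (QuotientGroup.eq_one_iff _).mp this
      obtain ⟨-, hyp⟩ := (hWmem _).mp hyW
      have h2p : (2 : ℕ) ∣ p := hxord ▸ orderOf_dvd_of_pow_eq_one hyp
      exact hp_odd ((Nat.prime_dvd_prime_iff_eq Nat.prime_two pp).mp h2p).symm
    · rw [comap_card_quotient W Nb]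
      exact hNbj

/-- Every finite supersolvable group `G` (i.e. `G` admits a chain
`⊥ = H 0 ≤ H 1 ≤ ⋯ ≤ H k = ⊤` of subgroups, each normal in `G`, with each factor
`H (i+1) / H i` cyclic) has a normal 2-complement: a normal subgroup `N` of odd order
with `G/N` a 2-group. -/
theorem stmt11 (G : Type*) [Group G] [Finite G]
    (hss : ∃ (k : ℕ) (H : ℕ → Subgroup G),
      H 0 = ⊥ ∧ H k = ⊤ ∧ (∀ i < k, H i ≤ H (i + 1)) ∧ (∀ i, (H i).Normal) ∧
      ∀ i < k, ∃ g : G, H (i + 1) = H i ⊔ Subgroup.zpowers g) :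
    ∃ N : Subgroup G, N.Normal ∧ Odd (Nat.card N) ∧ ∃ j : ℕ, Nat.card (G ⧸ N) = 2 ^ j :=
  stmt11_aux (Nat.card G) G rfl hss
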